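/- arXiv:2404.00428 — 3 statements merged into one kernel-verified Lean document; each statement's English description precedes it below -/
import Mathlib

section
/- Let S : ℝ → ℝ be strictly monotone and continuous, and let D denote the S-derivative operator. If a, b, c, r are real numbers with a·r² + b·r + c = 0, then the function ψ(x) = exp(r·S(x)) satisfies a·D²ψ(x) + b·Dψ(x) + c·ψ(x) = 0 at every x, where D²ψ denotes the S-derivative of Dψ. -/
open Filter Topology Real

/-- The S-derivative (fractal F^α-derivative with staircase function S):
`f` has S-derivative `d` at `x` iff `(f y - f x)/(S y - S x) → d` as `y → x`, `y ≠ x`. -/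
def HasSDerivAt (S f : ℝ → ℝ) (d x : ℝ) : Prop :=
  Tendsto (fun y => (f y - f x) / (S y - S x)) (𝓝[≠] x) (𝓝 d)

lemma hasSDerivAt_comp (S : ℝ → ℝ) (hS : StrictMono S) (hSc : Continuous S)
    (g : ℝ → ℝ) (g' x : ℝ) (hg : HasDerivAt g g' (S x)) :
    HasSDerivAt S (fun y => g (S y)) g' x := by
  have h1 : Tendsto S (𝓝[≠] x) (𝓝[≠] (S x)) := by
    apply tendsto_nhdsWithin_of_tendsto_nhds_of_eventually_within
    · exact (hSc.tendsto x).mono_left nhdsWithin_le_nhds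
    · filter_upwards [self_mem_nhdsWithin] with y hy
      exact fun h => hy (hS.injective h)
  have h2 := (hasDerivAt_iff_tendsto_slope.mp hg).comp h1
  have : (slope g (S x)) ∘ S = fun y => (g (S y) - g (S x)) / (S y - S x) := by
    ext y
    simp [slope, Function.comp, div_eq_inv_mul, mul_comm]
  rwa [this] at h2

theorem stmt_2 (S : ℝ → ℝ) (hS : StrictMono S) (hSc : Continuous S)
    (a b c r : ℝ) (hr : a * r ^ 2 + b * r + c = 0) :
    ∃ ψ' ψ'' : ℝ → ℝ,
      (∀ x, HasSDerivAt S (fun y => Real.exp (r * S y)) (ψ' x) x) ∧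
      (∀ x, HasSDerivAt S ψ' (ψ'' x) x) ∧
      (∀ x, a * ψ'' x + b * ψ' x + c * Real.exp (r * S x) = 0) := by
  refine ⟨fun x => r * Real.exp (r * S x), fun x => r ^ 2 * Real.exp (r * S x), ?_, ?_, ?_⟩
  · intro x
    have hg : HasDerivAt (fun z => Real.exp (r * z)) (r * Real.exp (r * S x)) (S x) := by
      simpa [mul_comm] using ((hasDerivAt_id (S x)).const_mul r).exp
    exact hasSDerivAt_comp S hS hSc _ _ x hg
  · intro x
    have hg : HasDerivAt (fun z => r * Real.exp (r * z)) (r ^ 2 * Real.exp (r * S x)) (S x) := by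
      have := (((hasDerivAt_id (S x)).const_mul r).exp).const_mul r
      simpa [mul_comm, mul_assoc, pow_two, mul_left_comm] using this
    exact hasSDerivAt_comp S hS hSc _ _ x hg
  · intro x
    have h : a * (r ^ 2 * Real.exp (r * S x)) + b * (r * Real.exp (r * S x))
        + c * Real.exp (r * S x) = (a * r ^ 2 + b * r + c) * Real.exp (r * S x) := by ring
    simp only [h, hr, zero_mul]
end

section
/- Let S : ℝ → ℝ be strictly monotone and continuous with D the S-derivative, and let a, b be real with a ≠ 0 and b² - 4ac = 0, so r = -b/(2a) is a double root of a·r² + b·r + c = 0. Then ψ(x) = S(x)·exp(-b·S(x)/(2a)) satisfies a·D²ψ + b·Dψ + c·ψ = 0 at every point. -/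
open Filter Topology Real

lemma sderiv_comp (S : ℝ → ℝ) (hS : StrictMono S) (hSc : Continuous S)
    (g : ℝ → ℝ) {d x : ℝ} (hg : HasDerivAt g d (S x)) :
    HasSDerivAt S (fun y => g (S y)) d x := by
  have h1 : Tendsto S (𝓝[≠] x) (𝓝[≠] (S x)) := by
    apply tendsto_nhdsWithin_of_tendsto_nhds_of_eventually_within
    · exact hSc.continuousAt.tendsto.mono_left nhdsWithin_le_nhds
    · filter_upwards [self_mem_nhdsWithin] with y hy
      exact fun h => hy (hS.injective h)
  have h2 := (hasDerivAt_iff_tendsto_slope.mp hg).comp h1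
  have : (fun y => (g (S y) - g (S x)) / (S y - S x))
      = (slope g (S x)) ∘ S := by
    funext y; simp [slope, Function.comp, div_eq_inv_mul]
  simpa [HasSDerivAt, this] using h2

theorem stmt_6 (S : ℝ → ℝ) (hS : StrictMono S) (hSc : Continuous S)
    (a b c : ℝ) (ha : a ≠ 0) (hdisc : b ^ 2 - 4 * a * c = 0) :
    ∃ ψ' ψ'' : ℝ → ℝ,
      (∀ x, HasSDerivAt S
        (fun y => S y * Real.exp (-b * S y / (2 * a))) (ψ' x) x) ∧
      (∀ x, HasSDerivAt S ψ' (ψ'' x) x) ∧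
      (∀ x, a * ψ'' x + b * ψ' x +
        c * (S x * Real.exp (-b * S x / (2 * a))) = 0) := by
  set r : ℝ := -b / (2 * a) with hr
  have hexp : ∀ u : ℝ, HasDerivAt (fun u => Real.exp (r * u)) (Real.exp (r * u) * r) u := by
    intro u
    simpa using (((hasDerivAt_id u).const_mul r).exp)
  have hg1 : ∀ u : ℝ, HasDerivAt (fun u => u * Real.exp (r * u))
      ((1 + r * u) * Real.exp (r * u)) u := by
    intro u
    have := (hasDerivAt_id u).fun_mul (hexp u)
    refine this.congr_deriv ?_
    simp only [id_eq]
    ring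
  have hg2 : ∀ u : ℝ, HasDerivAt (fun u => (1 + r * u) * Real.exp (r * u))
      ((2 * r + r ^ 2 * u) * Real.exp (r * u)) u := by
    intro u
    have := ((hasDerivAt_const u (1:ℝ)).fun_add ((hasDerivAt_id u).const_mul r)).fun_mul (hexp u)
    refine this.congr_deriv ?_
    simp only [id_eq]
    ring
  have harg : ∀ u : ℝ, -b * u / (2 * a) = r * u := by
    intro u; rw [hr]; ring
  refine ⟨fun x => (1 + r * S x) * Real.exp (r * S x),
    fun x => (2 * r + r ^ 2 * S x) * Real.exp (r * S x), ?_, ?_, ?_⟩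
  · intro x
    have heq : (fun y => S y * Real.exp (-b * S y / (2 * a)))
        = fun y => S y * Real.exp (r * S y) := by
      funext y; rw [harg]
    rw [heq]
    exact sderiv_comp S hS hSc (fun u => u * Real.exp (r * u)) (hg1 (S x))
  · intro x
    exact sderiv_comp S hS hSc (fun u => (1 + r * u) * Real.exp (r * u)) (hg2 (S x))
  · intro x
    rw [harg]
    have key : a * (2 * r + r ^ 2 * S x) + b * (1 + r * S x) + c * S x = 0 := by
      have h1 : 2 * a * r + b = 0 := by rw [hr]; field_simp; ring
      have h2 : a * r ^ 2 + b * r + c = 0 := by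
        rw [hr]; field_simp; linear_combination (-1) * hdisc
      linear_combination h1 + S x * h2
    calc a * ((2 * r + r ^ 2 * S x) * Real.exp (r * S x))
          + b * ((1 + r * S x) * Real.exp (r * S x))
          + c * (S x * Real.exp (r * S x))
        = (a * (2 * r + r ^ 2 * S x) + b * (1 + r * S x) + c * S x)
            * Real.exp (r * S x) := by ring
      _ = 0 := by rw [key]; ring
end

section
/- Let g, h : ℝ → ℝ be differentiable with g' = h and h' = -a₁h - a₂g, set ‖ψ(t)‖² = g(t)² + h(t)², and k = 1 + |a₁| + |a₂|. Then for all t and t₀: ‖ψ(t₀)‖·exp(-k|t - t₀|) ≤ ‖ψ(t)‖ ≤ ‖ψ(t₀)‖·exp(k|t - t₀|). -/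
private lemma sqrt_aux (x y c : ℝ) (hx : 0 ≤ x) (hxy : x ≤ y * Real.exp (2 * c)) :
    Real.sqrt x ≤ Real.sqrt y * Real.exp c := by
  have hy : 0 ≤ y := by
    nlinarith [Real.exp_pos (2 * c), hx.trans hxy, mul_pos (Real.exp_pos (2*c)) (Real.exp_pos (2*c))]
  calc Real.sqrt x ≤ Real.sqrt (y * Real.exp (2 * c)) := Real.sqrt_le_sqrt hxy
    _ = Real.sqrt y * Real.sqrt (Real.exp (2 * c)) := Real.sqrt_mul hy _
    _ = Real.sqrt y * Real.exp c := by
        rw [show Real.exp (2 * c) = (Real.exp c) ^ 2 by rw [sq, ← Real.exp_add]; ring_nf,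
          Real.sqrt_sq (Real.exp_nonneg c)]

private lemma sqrt_aux' (x y c : ℝ) (hx : 0 ≤ x) (hxy : x ≤ y * Real.exp (2 * c)) :
    Real.sqrt x * Real.exp (-c) ≤ Real.sqrt y := by
  have h1 := sqrt_aux x y c hx hxy
  calc Real.sqrt x * Real.exp (-c) ≤ (Real.sqrt y * Real.exp c) * Real.exp (-c) := by
        exact mul_le_mul_of_nonneg_right h1 (Real.exp_nonneg _)
    _ = Real.sqrt y := by rw [mul_assoc, ← Real.exp_add]; simp

theorem stmt_10 (a₁ a₂ : ℝ) (g h : ℝ → ℝ)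
    (hg : Differentiable ℝ g) (hh : Differentiable ℝ h)
    (hgh : ∀ t, deriv g t = h t)
    (hh' : ∀ t, deriv h t = -a₁ * h t - a₂ * g t)
    (k : ℝ) (hk : k = 1 + |a₁| + |a₂|) :
    ∀ t t₀ : ℝ,
      Real.sqrt (g t₀ ^ 2 + h t₀ ^ 2) * Real.exp (-k * |t - t₀|)
        ≤ Real.sqrt (g t ^ 2 + h t ^ 2) ∧
      Real.sqrt (g t ^ 2 + h t ^ 2)
        ≤ Real.sqrt (g t₀ ^ 2 + h t₀ ^ 2) * Real.exp (k * |t - t₀|) := by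
  set u : ℝ → ℝ := fun t => g t ^ 2 + h t ^ 2 with hu_def
  have hU : ∀ t, HasDerivAt u (2 * g t * h t + 2 * h t * (-a₁ * h t - a₂ * g t)) t := by
    intro t
    have h1 : HasDerivAt g (h t) t := by
      have := (hg t).hasDerivAt; rwa [hgh t] at this
    have h2 : HasDerivAt h (-a₁ * h t - a₂ * g t) t := by
      have := (hh t).hasDerivAt; rwa [hh' t] at this
    have := (h1.pow 2).add (h2.pow 2)
    convert this using 1
    · rfl
    · rfl
    · rfl
    push_cast; ring
  have hUdiff : Differentiable ℝ u := fun t => (hU t).differentiableAt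
  have hUnn : ∀ t, 0 ≤ u t := fun t => by positivity
  have hbound : ∀ t, |deriv u t| ≤ 2 * k * u t := by
    intro t
    rw [(hU t).deriv, abs_le]
    constructor <;>
    · simp only [hu_def, hk]
      nlinarith [sq_nonneg (g t - h t), sq_nonneg (g t + h t), le_abs_self a₁, neg_abs_le a₁,
        le_abs_self a₂, neg_abs_le a₂,
        mul_nonneg (by linarith [neg_abs_le a₁] : (0:ℝ) ≤ |a₁| + a₁) (sq_nonneg (h t)),
        mul_nonneg (by linarith [le_abs_self a₁] : (0:ℝ) ≤ |a₁| - a₁) (sq_nonneg (h t)),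
        mul_nonneg (by linarith [neg_abs_le a₂] : (0:ℝ) ≤ |a₂| + a₂) (sq_nonneg (g t + h t)),
        mul_nonneg (by linarith [le_abs_self a₂] : (0:ℝ) ≤ |a₂| - a₂) (sq_nonneg (g t - h t)),
        mul_nonneg (by linarith [neg_abs_le a₂] : (0:ℝ) ≤ |a₂| + a₂) (sq_nonneg (g t - h t)),
        mul_nonneg (by linarith [le_abs_self a₂] : (0:ℝ) ≤ |a₂| - a₂) (sq_nonneg (g t + h t))]
  -- A(t) = u t * exp(-(2k) t) is antitone
  have hAder : ∀ t, HasDerivAt (fun t => u t * Real.exp (-(2*k) * t))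
      (deriv u t * Real.exp (-(2*k) * t) + u t * (Real.exp (-(2*k) * t) * (-(2*k)))) t := by
    intro t
    have := ((hUdiff t).hasDerivAt).mul (((hasDerivAt_id t).const_mul (-(2*k))).exp)
    simpa [Pi.mul_def] using this
  have hA : Antitone (fun t => u t * Real.exp (-(2*k) * t)) := by
    apply antitone_of_deriv_nonpos
    · exact fun t => ((hAder t).differentiableAt)
    · intro t
      rw [(hAder t).deriv]
      have hb := (abs_le.mp (hbound t)).2
      nlinarith [Real.exp_pos (-(2*k) * t)]
  have hBder : ∀ t, HasDerivAt (fun t => u t * Real.exp ((2*k) * t))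
      (deriv u t * Real.exp ((2*k) * t) + u t * (Real.exp ((2*k) * t) * (2*k))) t := by
    intro t
    have := ((hUdiff t).hasDerivAt).mul (((hasDerivAt_id t).const_mul (2*k)).exp)
    simpa [Pi.mul_def] using this
  have hB : Monotone (fun t => u t * Real.exp ((2*k) * t)) := by
    apply monotone_of_deriv_nonneg
    · exact fun t => ((hBder t).differentiableAt)
    · intro t
      rw [(hBder t).deriv]
      have hb := (abs_le.mp (hbound t)).1
      nlinarith [Real.exp_pos ((2*k) * t)]
  -- core estimate: for s ≤ r, u r ≤ u s * exp (2k(r-s)) and u s ≤ u r * exp (2k(r-s))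
  have key : ∀ s r : ℝ, s ≤ r →
      u r ≤ u s * Real.exp (2 * (k * (r - s))) ∧ u s ≤ u r * Real.exp (2 * (k * (r - s))) := by
    intro s r hsr
    constructor
    · have this1 := hA hsr
      simp only at this1
      have he : (0:ℝ) < Real.exp (-(2*k) * r) := Real.exp_pos _
      have e1 : Real.exp (-(2*k) * s)
          = Real.exp (2 * (k * (r - s))) * Real.exp (-(2*k) * r) := by
        rw [← Real.exp_add]; congr 1; ring
      rw [e1, ← mul_assoc] at this1
      exact le_of_mul_le_mul_right this1 he
    · have this1 := hB hsr
      simp only at this1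
      have he : (0:ℝ) < Real.exp ((2*k) * s) := Real.exp_pos _
      have e1 : Real.exp ((2*k) * r)
          = Real.exp (2 * (k * (r - s))) * Real.exp ((2*k) * s) := by
        rw [← Real.exp_add]; congr 1; ring
      rw [e1, ← mul_assoc] at this1
      exact le_of_mul_le_mul_right this1 he
  intro t t₀
  rcases le_total t₀ t with hle | hle
  · have habs : |t - t₀| = t - t₀ := abs_of_nonneg (by linarith)
    obtain ⟨h1, h2⟩ := key t₀ t hle
    constructor
    · have := sqrt_aux' (u t₀) (u t) (k * (t - t₀)) (hUnn t₀) h2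
      rw [habs]; rw [show -k * (t - t₀) = -(k * (t - t₀)) by ring]; exact this
    · have := sqrt_aux (u t) (u t₀) (k * (t - t₀)) (hUnn t) h1
      rw [habs]; rw [show k * (t - t₀) = k * (t - t₀) by ring]; exact this
  · have habs : |t - t₀| = t₀ - t := by rw [abs_sub_comm]; exact abs_of_nonneg (by linarith)
    obtain ⟨h1, h2⟩ := key t t₀ hle
    constructor
    · have := sqrt_aux' (u t₀) (u t) (k * (t₀ - t)) (hUnn t₀) h1
      rw [habs, show -k * (t₀ - t) = -(k * (t₀ - t)) by ring]; exact this
    · have := sqrt_aux (u t) (u t₀) (k * (t₀ - t)) (hUnn t) h2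
      rw [habs]; exact this
end
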